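/- For n ≥ 2, the subgroup of Aut(W_n) generated by {σ_{12}} ∪ {α_{(i,i+1)} : i = 2,...,n-1} is finite. -/

import Mathlib

/-- The relations of the universal Coxeter group of rank `n`. -/
def univCoxeterRels (n : ℕ) : Set (FreeGroup (Fin n)) :=
  {r | ∃ i : Fin n, r = (FreeGroup.of i) ^ 2}

/-- The universal Coxeter group `Wₙ`, the free product of `n` copies of `ℤ/2`. -/
abbrev UnivCoxeterGroup (n : ℕ) := PresentedGroup (univCoxeterRels n)

/-- The standard generators `sᵢ` of `Wₙ`. -/
def ucs {n : ℕ} (i : Fin n) : UnivCoxeterGroup n := PresentedGroup.of i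

lemma ucs_sq {n : ℕ} (i : Fin n) : ucs i * ucs i = 1 := by
  have : ((FreeGroup.of i) ^ 2 : FreeGroup (Fin n)) ∈
      Subgroup.normalClosure (univCoxeterRels n) :=
    Subgroup.subset_normalClosure ⟨i, rfl⟩
  have h : (ucs i) ^ 2 = 1 := (QuotientGroup.eq_one_iff _).mpr this
  simpa [pow_two] using h

lemma ucs_cancel {n : ℕ} (i : Fin n) (x : UnivCoxeterGroup n) :
    ucs i * (ucs i * x) = x := by
  rw [← mul_assoc, ucs_sq, one_mul]

/-- `cc false = 1`, `cc true = s₀`. -/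
def cc {n : ℕ} (hn : 2 ≤ n) (b : Bool) : UnivCoxeterGroup n :=
  if b then ucs ⟨0, lt_of_lt_of_le (by norm_num) hn⟩ else 1

/-- For `n ≥ 2`, the subgroup of `Aut(Wₙ)` generated by `σ₁₂` together with the
adjacent transposition automorphisms `α_{(i,i+1)}` for `i = 2, …, n-1` is finite. -/
theorem aut_univCoxeter_B_subgroup_finite (n : ℕ) (hn : 2 ≤ n)
    (σ₁₂ : MulAut (UnivCoxeterGroup n))
    (hσ₁ : σ₁₂ (ucs ⟨1, by omega⟩) =
      ucs ⟨0, by omega⟩ * ucs ⟨1, by omega⟩ * ucs ⟨0, by omega⟩)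
    (hσ₂ : ∀ k : Fin n, k ≠ ⟨1, by omega⟩ → σ₁₂ (ucs k) = ucs k)
    (α : Equiv.Perm (Fin n) →* MulAut (UnivCoxeterGroup n))
    (hα : ∀ (π : Equiv.Perm (Fin n)) (k : Fin n), α π (ucs k) = ucs (π k)) :
    (Subgroup.closure ({σ₁₂} ∪
      {x | ∃ i : ℕ, ∃ h : 1 ≤ i ∧ i + 2 ≤ n,
        x = α (Equiv.swap ⟨i, by omega⟩ ⟨i + 1, by omega⟩)}) :
      Set (MulAut (UnivCoxeterGroup n))).Finite := by
  set z : Fin n := ⟨0, by omega⟩ with hz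
  set o : Fin n := ⟨1, by omega⟩ with ho
  have hsq : ucs z * ucs z = 1 := ucs_sq z
  -- key invariant
  set P : MulAut (UnivCoxeterGroup n) → Prop := fun φ =>
    ∃ π : Equiv.Perm (Fin n), ∃ ε : Fin n → Bool, π z = z ∧
      ∀ k, φ (ucs k) = cc hn (ε k) * ucs (π k) * cc hn (ε k) with hP
  have hcc0 : ∀ {φ : MulAut (UnivCoxeterGroup n)}, P φ →
      ∀ b, φ (cc hn b) = cc hn b := by
    rintro φ ⟨π, ε, hπ0, hφ⟩ b
    cases b with
    | false => simp [cc]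
    | true =>
      have := hφ z
      rw [hπ0] at this
      cases hε : ε z with
      | false => simpa [cc, hε] using this
      | true =>
        simp [cc, hε] at this
        show φ (ucs z) = ucs z
        rw [this, mul_assoc]
        show ucs z * (ucs z * ucs z) = ucs z
        rw [hsq, mul_one]
  have hclosP : ∀ φ ∈ Subgroup.closure ({σ₁₂} ∪
      {x | ∃ i : ℕ, ∃ h : 1 ≤ i ∧ i + 2 ≤ n,
        x = α (Equiv.swap ⟨i, by omega⟩ ⟨i + 1, by omega⟩)}), P φ := by
    intro φ hφ
    induction hφ using Subgroup.closure_induction with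
    | mem x hx =>
      rcases hx with hx | ⟨i, ⟨hi1, hi2⟩, rfl⟩
      · -- x = σ₁₂
        rcases hx with rfl
        refine ⟨1, fun k => if k = o then true else false, rfl, fun k => ?_⟩
        by_cases hk : k = o
        · subst hk; simpa [cc] using hσ₁
        · simp [cc, hk, hσ₂ k hk]
      · refine ⟨Equiv.swap ⟨i, by omega⟩ ⟨i + 1, by omega⟩, fun _ => false, ?_, fun k => ?_⟩
        · apply Equiv.swap_apply_of_ne_of_ne <;>
            · intro h
              have := congrArg Fin.val h
              simp only [hz] at this
              omega
        · simp [cc, hα]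
    | one => exact ⟨1, fun _ => false, rfl, fun k => by simp [cc]⟩
    | mul x y hx hy Px Py =>
      obtain ⟨πx, εx, hx0, hxe⟩ := Px
      obtain ⟨πy, εy, hy0, hye⟩ := Py
      have Px' : P x := ⟨πx, εx, hx0, hxe⟩
      refine ⟨πx * πy, fun k => xor (εy k) (εx (πy k)), by simp [hy0, hx0], fun k => ?_⟩
      have : (x * y) (ucs k) = x (y (ucs k)) := rfl
      rw [this, hye k, map_mul, map_mul, hcc0 Px', hxe (πy k)]
      cases hεy : εy k <;> cases hεx : εx (πy k) <;>
        simp [hεy, hεx, cc, mul_assoc, hsq, ucs_sq, ucs_cancel, Equiv.Perm.mul_apply]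
    | inv x hx Px =>
      obtain ⟨πx, εx, hx0, hxe⟩ := Px
      have Px' : P x := ⟨πx, εx, hx0, hxe⟩
      refine ⟨πx⁻¹, fun k => εx (πx⁻¹ k), (Equiv.symm_apply_eq πx).mpr hx0.symm, fun k => ?_⟩
      have key : x (cc hn (εx (πx⁻¹ k)) * ucs (πx⁻¹ k) * cc hn (εx (πx⁻¹ k))) = ucs k := by
        rw [map_mul, map_mul, hcc0 Px', hxe (πx⁻¹ k)]
        have : πx (πx⁻¹ k) = k := Equiv.apply_symm_apply πx k
        rw [this]
        cases hε : εx (πx⁻¹ k) <;>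
          simp [hε, cc, mul_assoc, hsq, ucs_sq, ucs_cancel]
      have : x⁻¹ (ucs k) = x⁻¹ (x (cc hn (εx (πx⁻¹ k)) * ucs (πx⁻¹ k) * cc hn (εx (πx⁻¹ k)))) := by
        rw [key]
      rw [this]
      exact x.symm_apply_apply _
  -- now finiteness
  set F : Set (UnivCoxeterGroup n) :=
    Set.range (fun p : Bool × Fin n => cc hn p.1 * ucs p.2 * cc hn p.1) with hF
  have hFfin : F.Finite := Set.finite_range _
  have hinj : Set.InjOn (fun φ : MulAut (UnivCoxeterGroup n) => fun k : Fin n => φ (ucs k))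
      Set.univ := by
    intro φ _ ψ _ h
    have h' : ∀ k : Fin n, φ (ucs k) = ψ (ucs k) := fun k => congrFun h k
    have : (φ : UnivCoxeterGroup n →* UnivCoxeterGroup n)
        = (ψ : UnivCoxeterGroup n →* UnivCoxeterGroup n) :=
      PresentedGroup.ext fun k => h' k
    ext g
    exact DFunLike.congr_fun this g
  apply Set.Finite.of_finite_image ?_ (hinj.mono (Set.subset_univ _))
  apply Set.Finite.subset (Set.Finite.pi (fun _ : Fin n => hFfin))
  rintro f ⟨φ, hφ, rfl⟩
  obtain ⟨π, ε, _, hφe⟩ := hclosP φ hφ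
  intro k _
  exact ⟨(ε k, π k), (hφe k).symm⟩
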